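/- Let f, g ∈ ℤ[x₁,…,x_n] with gcd(f,g) = 1. Then for any positive integers k₁,…,k_n, gcd(f(x₁^{k₁},…,x_n^{k_n}), g(x₁^{k₁},…,x_n^{k_n})) = 1. -/

import Mathlib

open MvPolynomial
open scoped nonZeroDivisors

section Bezout

/-- Over a UFD, relatively prime polynomials (not both zero) satisfy a Bezout
identity with a nonzero constant. -/
theorem bezout_const' {R : Type*} [CommRing R] [IsDomain R] [UniqueFactorizationMonoid R]
    {F G : Polynomial R} (h : IsRelPrime F G) (h0 : ¬(F = 0 ∧ G = 0)) :
    ∃ (A B : Polynomial R) (c : R), c ≠ 0 ∧ A * F + B * G = Polynomial.C c := by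
  classical
  letI : NormalizationMonoid R :=
    UniqueFactorizationMonoid.normalizationMonoid.toNormalizationMonoid
  letI : NormalizedGCDMonoid R := UniqueFactorizationMonoid.toNormalizedGCDMonoid R
  have hι : Function.Injective (algebraMap R (FractionRing R)) :=
    IsFractionRing.injective R (FractionRing R)
  have hmapinj : Function.Injective (Polynomial.map (algebraMap R (FractionRing R))) :=
    Polynomial.map_injective _ hι
  have hcop : IsCoprime (F.map (algebraMap R (FractionRing R)))
      (G.map (algebraMap R (FractionRing R))) := by
    by_contra hnc
    have hg0 : EuclideanDomain.gcd (F.map (algebraMap R (FractionRing R)))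
        (G.map (algebraMap R (FractionRing R))) ≠ 0 := by
      rw [Ne, EuclideanDomain.gcd_eq_zero_iff]
      rintro ⟨hF, hG⟩
      exact h0 ⟨hmapinj (by simpa using hF), hmapinj (by simpa using hG)⟩
    have hgu : ¬IsUnit (EuclideanDomain.gcd (F.map (algebraMap R (FractionRing R)))
        (G.map (algebraMap R (FractionRing R)))) := fun hu =>
      hnc (EuclideanDomain.gcd_isUnit_iff.mp hu)
    obtain ⟨p, hpirr, hpdvd⟩ := WfDvdMonoid.exists_irreducible_factor hgu hg0
    have hpF : p ∣ F.map (algebraMap R (FractionRing R)) :=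
      hpdvd.trans (EuclideanDomain.gcd_dvd_left _ _)
    have hpG : p ∣ G.map (algebraMap R (FractionRing R)) :=
      hpdvd.trans (EuclideanDomain.gcd_dvd_right _ _)
    have hp0 : p ≠ 0 := hpirr.ne_zero
    set q : Polynomial R := (IsLocalization.integerNormalization R⁰ p).primPart with hqdef
    obtain ⟨s, hs⟩ := IsLocalization.integerNormalization_map_to_map R⁰ p
    have hiN0 : IsLocalization.integerNormalization R⁰ p ≠ 0 := fun h' =>
      hp0 (IsFractionRing.integerNormalization_eq_zero_iff.mp h')
    have hct : (IsLocalization.integerNormalization R⁰ p).content ≠ 0 := fun h' =>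
      hiN0 (Polynomial.content_eq_zero_iff.mp h')
    have hs0 : (s : R) ≠ 0 := nonZeroDivisors.coe_ne_zero s
    have hq0 : q ≠ 0 := Polynomial.primPart_ne_zero _
    have heq : Polynomial.C (algebraMap R (FractionRing R)
          ((IsLocalization.integerNormalization R⁰ p).content)) *
          (q.map (algebraMap R (FractionRing R)))
        = Polynomial.C (algebraMap R (FractionRing R) (s : R)) * p := by
      rw [← Polynomial.map_C, ← Polynomial.map_mul,
        ← (IsLocalization.integerNormalization R⁰ p).eq_C_content_mul_primPart, hs,
        Algebra.smul_def, Polynomial.algebraMap_apply]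
    have hctK : algebraMap R (FractionRing R)
        ((IsLocalization.integerNormalization R⁰ p).content) ≠ 0 := fun h' =>
      hct (hι (h'.trans (map_zero _).symm))
    have hsK : algebraMap R (FractionRing R) (s : R) ≠ 0 := fun h' =>
      hs0 (hι (h'.trans (map_zero _).symm))
    obtain ⟨u1, hu1⟩ := Polynomial.isUnit_C.mpr (isUnit_iff_ne_zero.mpr hctK)
    obtain ⟨u2, hu2⟩ := Polynomial.isUnit_C.mpr (isUnit_iff_ne_zero.mpr hsK)
    have hassoc : Associated p (q.map (algebraMap R (FractionRing R))) := by
      refine ⟨u2 * u1⁻¹, ?_⟩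
      apply mul_left_cancel₀ u1.ne_zero
      calc (↑u1 : Polynomial (FractionRing R)) * (p * ↑(u2 * u1⁻¹))
          = (↑u1 * ↑u1⁻¹) * (↑u2 * p) := by rw [Units.val_mul]; ring
        _ = ↑u2 * p := by rw [Units.mul_inv, one_mul]
        _ = ↑u1 * q.map (algebraMap R (FractionRing R)) := by rw [hu1, hu2, heq]
    have hqirr : Irreducible q :=
      ((Polynomial.isPrimitive_primPart _).irreducible_iff_irreducible_map_fraction_map
        (K := FractionRing R)).mpr (hassoc.irreducible hpirr)
    have hqprime : Prime q := UniqueFactorizationMonoid.irreducible_iff_prime.mp hqirr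
    have hqdeg : 0 < q.natDegree := by
      obtain ⟨u, hu⟩ := hassoc
      have hndeg := Polynomial.natDegree_mul hp0 u.ne_zero
      rw [hu, Polynomial.natDegree_eq_zero_of_isUnit u.isUnit, add_zero,
        Polynomial.natDegree_map_eq_of_injective hι] at hndeg
      rw [hndeg]
      exact hpirr.natDegree_pos
    have key : ∀ H : Polynomial R, p ∣ H.map (algebraMap R (FractionRing R)) → q ∣ H := by
      intro H hpH
      have hqH : q.map (algebraMap R (FractionRing R)) ∣ H.map (algebraMap R (FractionRing R)) :=
        hassoc.symm.dvd.trans hpH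
      obtain ⟨w, hw⟩ := hqH
      obtain ⟨t, ht⟩ := IsLocalization.integerNormalization_map_to_map R⁰ w
      have ht0 : (t : R) ≠ 0 := nonZeroDivisors.coe_ne_zero t
      have heq2 : Polynomial.C (t : R) * H = q * IsLocalization.integerNormalization R⁰ w := by
        apply hmapinj
        rw [Polynomial.map_mul, Polynomial.map_mul, Polynomial.map_C, ht, hw,
          Algebra.smul_def, Polynomial.algebraMap_apply]
        ring
      have hdvd : q ∣ Polynomial.C (t : R) * H := Dvd.intro _ heq2.symm
      rcases hqprime.2.2 _ _ hdvd with h' | h'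
      · exfalso
        have hle := Polynomial.natDegree_le_of_dvd h' (Polynomial.C_ne_zero.mpr ht0)
        rw [Polynomial.natDegree_C] at hle
        omega
      · exact h'
    exact (Polynomial.not_isUnit_of_natDegree_pos q hqdeg) (h (key F hpF) (key G hpG))
  obtain ⟨A', B', hAB⟩ := hcop
  obtain ⟨sa, hsa⟩ := IsLocalization.integerNormalization_map_to_map R⁰ A'
  obtain ⟨sb, hsb⟩ := IsLocalization.integerNormalization_map_to_map R⁰ B'
  refine ⟨Polynomial.C (sb : R) * IsLocalization.integerNormalization R⁰ A',
    Polynomial.C (sa : R) * IsLocalization.integerNormalization R⁰ B',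
    (sa : R) * (sb : R),
    mul_ne_zero (nonZeroDivisors.coe_ne_zero sa) (nonZeroDivisors.coe_ne_zero sb), ?_⟩
  apply hmapinj
  rw [Polynomial.map_add, Polynomial.map_mul, Polynomial.map_mul, Polynomial.map_mul,
    Polynomial.map_mul, Polynomial.map_C, Polynomial.map_C, hsa, hsb, Polynomial.map_C,
    Algebra.smul_def, Algebra.smul_def, Polynomial.algebraMap_apply, Polynomial.algebraMap_apply,
    map_mul, Polynomial.C_mul]
  linear_combination (Polynomial.C (algebraMap R (FractionRing R) (sa : R)) *
    Polynomial.C (algebraMap R (FractionRing R) (sb : R))) * hAB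

end Bezout

section Subst

variable {σ : Type*} [Fintype σ] [DecidableEq σ]

/-- Multiply exponents pointwise. -/
noncomputable def kdil (k : σ → ℕ) (e : σ →₀ ℕ) : σ →₀ ℕ :=
  Finsupp.equivFunOnFinite.symm fun i => k i * e i

lemma kdil_apply (k : σ → ℕ) (e : σ →₀ ℕ) (i : σ) : kdil k e i = k i * e i := rfl

lemma kdil_injective (k : σ → ℕ) (hk : ∀ i, 0 < k i) : Function.Injective (kdil k) := by
  intro a b hab
  ext i
  have h := DFunLike.congr_fun hab i
  rw [kdil_apply, kdil_apply] at h
  exact Nat.eq_of_mul_eq_mul_left (hk i) h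

lemma kdil_support (k : σ → ℕ) (hk : ∀ i, 0 < k i) (e : σ →₀ ℕ) :
    (kdil k e).support = e.support := by
  ext i
  simp only [Finsupp.mem_support_iff, kdil_apply, Ne, Nat.mul_eq_zero, not_or]
  have hne := (hk i).ne'
  tauto

lemma bind₁_monomial_pow (k : σ → ℕ) (hk : ∀ i, 0 < k i) (e : σ →₀ ℕ) (c : ℤ) :
    (bind₁ fun i => (X i : MvPolynomial σ ℤ) ^ k i) (monomial e c)
      = monomial (kdil k e) c := by
  rw [bind₁_monomial]
  have h1 : ∀ i ∈ e.support, ((X i : MvPolynomial σ ℤ) ^ k i) ^ e i = X i ^ (kdil k e) i := by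
    intro i _
    rw [← pow_mul, kdil_apply]
  rw [Finset.prod_congr rfl h1]
  have h2 : ∏ i ∈ e.support, (X i : MvPolynomial σ ℤ) ^ (kdil k e) i = monomial (kdil k e) 1 := by
    rw [← kdil_support k hk e]
    exact prod_X_pow_eq_monomial
  rw [h2, C_mul_monomial, mul_one]

lemma coeff_bind₁_pow (k : σ → ℕ) (hk : ∀ i, 0 < k i) (p : MvPolynomial σ ℤ) (e : σ →₀ ℕ) :
    coeff (kdil k e) ((bind₁ fun i => (X i : MvPolynomial σ ℤ) ^ k i) p) = coeff e p := by
  have hrw : (bind₁ fun i => (X i : MvPolynomial σ ℤ) ^ k i) p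
      = ∑ v ∈ p.support, monomial (kdil k v) (coeff v p) := by
    conv_lhs => rw [p.as_sum]
    rw [map_sum]
    exact Finset.sum_congr rfl fun v _ => bind₁_monomial_pow k hk v (coeff v p)
  rw [hrw, coeff_sum]
  have h1 : ∀ v ∈ p.support,
      coeff (kdil k e) (monomial (kdil k v) (coeff v p))
        = if v = e then coeff v p else 0 := by
    intro v _
    rw [coeff_monomial]
    congr 1
    simp [(kdil_injective k hk).eq_iff]
  rw [Finset.sum_congr rfl h1, Finset.sum_ite_eq' p.support e (fun v => coeff v p)]
  by_cases he : e ∈ p.support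
  · simp [he]
  · simp [he, notMem_support_iff.mp he]

lemma bind₁_pow_injective (k : σ → ℕ) (hk : ∀ i, 0 < k i) :
    Function.Injective (bind₁ fun i => (X i : MvPolynomial σ ℤ) ^ k i) := by
  intro a b hab
  apply MvPolynomial.ext
  intro e
  have := congrArg (coeff (kdil k e)) hab
  rwa [coeff_bind₁_pow k hk, coeff_bind₁_pow k hk] at this

lemma C_dvd_of_bind₁ (k : σ → ℕ) (hk : ∀ i, 0 < k i) (m : ℤ) (p : MvPolynomial σ ℤ)
    (h : C m ∣ (bind₁ fun i => (X i : MvPolynomial σ ℤ) ^ k i) p) : C m ∣ p := by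
  rw [C_dvd_iff_dvd_coeff] at h ⊢
  intro e
  rw [← coeff_bind₁_pow k hk p e]
  exact h _

end Subst

section OptionEq

lemma optionEquivLeft_rename_some {τ : Type*} (c : MvPolynomial τ ℤ) :
    optionEquivLeft ℤ τ (rename some c) = Polynomial.C c := by
  induction c using MvPolynomial.induction_on with
  | C a => rw [rename_C, optionEquivLeft_C]
  | add p q hp hq => simp only [map_add, hp, hq]
  | mul_X p j hp => simp only [map_mul, rename_X, optionEquivLeft_X_some, hp]

/-- The algebra equivalence singling out the variable `i`. -/
noncomputable def Ei {n : ℕ} (i : Fin n) :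
    MvPolynomial (Fin n) ℤ ≃ₐ[ℤ] Polynomial (MvPolynomial {j : Fin n // j ≠ i} ℤ) :=
  (renameEquiv ℤ (Equiv.optionSubtypeNe i).symm).trans
    (optionEquivLeft ℤ {j : Fin n // j ≠ i})

lemma Ei_rename {n : ℕ} (i : Fin n) (c : MvPolynomial {j : Fin n // j ≠ i} ℤ) :
    Ei i (rename Subtype.val c) = Polynomial.C c := by
  show optionEquivLeft ℤ _
    (renameEquiv ℤ (Equiv.optionSubtypeNe i).symm (rename Subtype.val c)) = _
  rw [renameEquiv_apply, rename_rename]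
  have hfun : ((Equiv.optionSubtypeNe i).symm ∘ Subtype.val :
      {j : Fin n // j ≠ i} → Option {j : Fin n // j ≠ i}) = some := by
    funext j
    rw [Function.comp_apply, Equiv.optionSubtypeNe_symm_of_ne j.2]
  rw [hfun, optionEquivLeft_rename_some]

lemma Ei_symm_C {n : ℕ} (i : Fin n) (c : MvPolynomial {j : Fin n // j ≠ i} ℤ) :
    (Ei i).symm (Polynomial.C c) = rename Subtype.val c := by
  rw [← Ei_rename i c, AlgEquiv.symm_apply_apply]

end OptionEq

theorem lemmaA {n : ℕ} (f g : MvPolynomial (Fin n) ℤ) (hcop : IsRelPrime f g) (i : Fin n) :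
    ∃ (a b : MvPolynomial (Fin n) ℤ) (c : MvPolynomial {j : Fin n // j ≠ i} ℤ),
      c ≠ 0 ∧ a * f + b * g = rename Subtype.val c := by
  have h0 : ¬(Ei i f = 0 ∧ Ei i g = 0) := by
    rintro ⟨hf, hg⟩
    have hf0 : f = 0 := (Ei i).injective (hf.trans (map_zero (Ei i)).symm)
    have hg0 : g = 0 := (Ei i).injective (hg.trans (map_zero (Ei i)).symm)
    have hu : IsUnit (C (2 : ℤ) : MvPolynomial (Fin n) ℤ) :=
      hcop (by rw [hf0]; exact dvd_zero _) (by rw [hg0]; exact dvd_zero _)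
    have h2 : IsUnit (2 : ℤ) := by
      have := hu.map (constantCoeff (σ := Fin n) (R := ℤ))
      rwa [constantCoeff_C] at this
    rw [Int.isUnit_iff] at h2
    omega
  have hrel : IsRelPrime (Ei i f) (Ei i g) := by
    intro d hd1 hd2
    have h1 : (Ei i).symm d ∣ f := by
      have := map_dvd (Ei i).symm hd1
      rwa [AlgEquiv.symm_apply_apply] at this
    have h2 : (Ei i).symm d ∣ g := by
      have := map_dvd (Ei i).symm hd2
      rwa [AlgEquiv.symm_apply_apply] at this
    have hu := hcop h1 h2
    simpa using hu.map (Ei i)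
  obtain ⟨A, B, c, hc0, hABc⟩ := bezout_const' hrel h0
  refine ⟨(Ei i).symm A, (Ei i).symm B, c, hc0, ?_⟩
  have heq := congrArg (Ei i).symm hABc
  rwa [map_add, map_mul, map_mul, AlgEquiv.symm_apply_apply, AlgEquiv.symm_apply_apply,
    Ei_symm_C] at heq

theorem stmt13 (n : ℕ) (f g : MvPolynomial (Fin n) ℤ)
    (hcop : IsRelPrime f g) (k : Fin n → ℕ) (hk : ∀ i, 0 < k i) :
    IsRelPrime ((bind₁ fun i => (X i : MvPolynomial (Fin n) ℤ) ^ k i) f)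
      ((bind₁ fun i => (X i : MvPolynomial (Fin n) ℤ) ^ k i) g) := by
  classical
  intro d hdf hdg
  have key : ∀ i : Fin n, ∃ u : MvPolynomial {j : Fin n // j ≠ i} ℤ,
      d = rename Subtype.val u := by
    intro i
    obtain ⟨a, b, c, hc0, habc⟩ := lemmaA f g hcop i
    have hd : d ∣ (bind₁ fun i => (X i : MvPolynomial (Fin n) ℤ) ^ k i)
        (rename Subtype.val c) := by
      rw [← habc, map_add, map_mul, map_mul]
      exact dvd_add (hdf.mul_left _) (hdg.mul_left _)
    set c' := (bind₁ fun j : {j : Fin n // j ≠ i} =>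
      (X j : MvPolynomial {j : Fin n // j ≠ i} ℤ) ^ k j.val) c with hc'
    have hcomm : (bind₁ fun i => (X i : MvPolynomial (Fin n) ℤ) ^ k i)
        (rename Subtype.val c) = rename Subtype.val c' := by
      rw [hc', bind₁, bind₁, aeval_rename, comp_aeval_apply]
      have hfun : ((fun i => (X i : MvPolynomial (Fin n) ℤ) ^ k i) ∘ Subtype.val)
          = fun j : {j : Fin n // j ≠ i} =>
            rename Subtype.val ((X j : MvPolynomial {j : Fin n // j ≠ i} ℤ) ^ k j.val) := by
        funext j
        simp
      rw [hfun]
    rw [hcomm] at hd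
    have hc'0 : c' ≠ 0 := by
      intro h'
      apply hc0
      exact bind₁_pow_injective (fun j : {j : Fin n // j ≠ i} => k j.val)
        (fun j => hk j.val) (by rw [← hc', h', map_zero])
    have hdE : (Ei i) d ∣ Polynomial.C c' := by
      have := map_dvd (Ei i) hd
      rwa [Ei_rename] at this
    have hdeg : ((Ei i) d).natDegree = 0 := by
      have h1 := Polynomial.natDegree_le_of_dvd hdE (Polynomial.C_ne_zero.mpr hc'0)
      rw [Polynomial.natDegree_C] at h1
      omega
    obtain ⟨u, hu⟩ := Polynomial.natDegree_eq_zero.mp hdeg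
    refine ⟨u, ?_⟩
    have := congrArg (Ei i).symm hu
    rw [Ei_symm_C, AlgEquiv.symm_apply_apply] at this
    exact this.symm
  have hdC : d = C (coeff 0 d) := by
    apply MvPolynomial.ext
    intro m
    rw [coeff_C]
    split_ifs with h
    · rw [← h]
    · by_contra hne
      have hm : ∃ i, m i ≠ 0 := by
        by_contra hall
        push_neg at hall
        exact h (Finsupp.ext fun i => by simpa using hall i).symm
      obtain ⟨i, hi⟩ := hm
      obtain ⟨u, hu⟩ := key i
      have hvars : i ∈ d.vars :=
        (mem_vars i).mpr ⟨m, mem_support_iff.mpr hne, Finsupp.mem_support_iff.mpr hi⟩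
      rw [hu] at hvars
      obtain ⟨j, _, hj⟩ := Finset.mem_image.mp (vars_rename Subtype.val u hvars)
      exact j.2 hj
  rw [hdC] at hdf hdg ⊢
  exact hcop (C_dvd_of_bind₁ k hk _ _ hdf) (C_dvd_of_bind₁ k hk _ _ hdg)
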